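/- The Solecki ideal S and Mazur's ideal M are not Egorov. -/

import Mathlib

open MeasureTheory Set

/-- An ideal on a (countable) set `X`. -/
def IsIdeal {X : Type} (I : Set (Set X)) : Prop :=
  (∀ A B : Set X, A ∈ I → B ∈ I → A ∪ B ∈ I) ∧
  (∀ A B : Set X, A ⊆ B → B ∈ I → A ∈ I) ∧
  (∀ A : Set X, A.Finite → A ∈ I) ∧
  (Set.univ : Set X) ∉ I

/-- `I`-pointwise convergence on `[0,1]` of a family of functions. -/
def IConvPtwise {X : Type} (I : Set (Set X)) (f : X → ℝ → ℝ) (g : ℝ → ℝ) : Prop :=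
  ∀ t ∈ Icc (0:ℝ) 1, ∀ ε : ℝ, 0 < ε → {a : X | ε ≤ |f a t - g t|} ∈ I

/-- `I`-uniform convergence on `M` of a family of functions. -/
def IConvUnif {X : Type} (I : Set (Set X)) (f : X → ℝ → ℝ) (g : ℝ → ℝ) (M : Set ℝ) : Prop :=
  ∀ ε : ℝ, 0 < ε → {a : X | ∃ t ∈ M, ε ≤ |f a t - g t|} ∈ I

/-- `I` is an Egorov ideal. -/
def IsEgorov {X : Type} (I : Set (Set X)) : Prop :=
  ∀ (f : X → ℝ → ℝ) (g : ℝ → ℝ),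
    (∀ a : X, AEMeasurable (f a) (volume.restrict (Icc (0:ℝ) 1))) →
    AEMeasurable g (volume.restrict (Icc (0:ℝ) 1)) →
    IConvPtwise I f g →
    ∀ η : ℝ, 0 < η →
      ∃ M : Set ℝ, M ⊆ Icc (0:ℝ) 1 ∧ NullMeasurableSet M volume ∧
        volume (Icc (0:ℝ) 1 \ M) < ENNReal.ofReal η ∧
        IConvUnif I f g M

def IsSubmeasure (φ : Set ℕ → ENNReal) : Prop :=
  φ ∅ = 0 ∧ (∀ n : ℕ, φ {n} < ⊤) ∧
  ∀ A B : Set ℕ, φ A ≤ φ (A ∪ B) ∧ φ (A ∪ B) ≤ φ A + φ B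

def IsLscSubmeasure (φ : Set ℕ → ENNReal) : Prop :=
  ∀ A : Set ℕ, φ A = ⨆ n : ℕ, φ (A ∩ Iio n)

def IsNonpathological (φ : Set ℕ → ENNReal) : Prop :=
  ∀ A : Set ℕ, φ A = ⨆ (μ : Measure ℕ) (_ : ∀ B : Set ℕ, μ B ≤ φ B), μ A

/-- `I` is a non-pathological Σ⁰₂ ideal: `I = Fin(φ)` for some non-pathological
lsc submeasure `φ` with `φ(ω) = ∞`. -/
def IsNonpathSigma2 (I : Set (Set ℕ)) : Prop :=
  ∃ φ : Set ℕ → ENNReal, IsSubmeasure φ ∧ IsLscSubmeasure φ ∧ IsNonpathological φ ∧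
    φ Set.univ = ⊤ ∧ I = {A : Set ℕ | φ A < ⊤}

def IdealCountablyGenerated {X : Type} (I : Set (Set X)) : Prop :=
  ∃ B : Set (Set X), B.Countable ∧ B ⊆ I ∧
    ∀ A ∈ I, ∃ F : Set (Set X), F ⊆ B ∧ F.Finite ∧ A ⊆ ⋃₀ F

def IdealIso {X Y : Type} (I : Set (Set X)) (J : Set (Set Y)) : Prop :=
  ∃ f : Y → X, Function.Bijective f ∧ ∀ A : Set X, (A ∈ I ↔ f ⁻¹' A ∈ J)

def RKle {X Y : Type} (I : Set (Set X)) (J : Set (Set Y)) : Prop :=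
  ∃ f : Y → X, ∀ A : Set X, (A ∈ I ↔ f ⁻¹' A ∈ J)

def RBle {X Y : Type} (I : Set (Set X)) (J : Set (Set Y)) : Prop :=
  ∃ f : Y → X, (∀ x : X, (f ⁻¹' {x}).Finite) ∧ ∀ A : Set X, (A ∈ I ↔ f ⁻¹' A ∈ J)

/-- The restriction `I↾A` of an ideal, as an ideal on the subtype `↥A`. -/
def restrictIdeal {X : Type} (I : Set (Set X)) (A : Set X) : Set (Set ↥A) :=
  {S : Set ↥A | (Subtype.val '' S) ∈ I}

def IsTall {X : Type} (I : Set (Set X)) : Prop :=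
  ∀ A : Set X, A.Infinite → ∃ B ∈ I, B.Infinite ∧ B ⊆ A
/-- `C ⊆ 2^ω` is determined by its first `n` coordinates. -/
def DetBy (C : Set (ℕ → Bool)) (n : ℕ) : Prop :=
  ∀ x y : ℕ → Bool, (∀ i : ℕ, i < n → x i = y i) → (x ∈ C → y ∈ C)

/-- `Ω`: the family of all clopen subsets of `2^ω` of Haar measure `1/2`. A clopen set
is determined by its first `n` coordinates for some `n`, and having measure `1/2` means
that exactly `2^n / 2` of the `2^n` many patterns of the first `n` coordinates lie in it
(the patterns are counted via their extensions by `false`). -/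
def OmegaHalf : Set (Set (ℕ → Bool)) :=
  {C | IsClopen C ∧ ∃ n : ℕ, DetBy C n ∧
    2 * Nat.card {s : ℕ → Bool // s ∈ C ∧ ∀ i : ℕ, n ≤ i → s i = false} = 2 ^ n}

/-- The generator `B_x = {C ∈ Ω : x ∈ C}` of the Solecki ideal. -/
def SolGen (x : ℕ → Bool) : Set ↥OmegaHalf := {C : ↥OmegaHalf | x ∈ C.1}

/-- The Solecki ideal `S` on `Ω`, generated by the sets `B_x` for `x ∈ 2^ω`. -/
def SoleckiIdeal : Set (Set ↥OmegaHalf) :=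
  {A | ∃ F : Set (ℕ → Bool), F.Finite ∧ A ⊆ ⋃ x ∈ F, SolGen x}

/-- The underlying set `∑_{n∈ω} (2n)^n` of Mazur's ideal. -/
abbrev MazurPt := Σ n : ℕ, (Fin n → Fin (2 * n))

/-- `M^n_i = {f ∈ (2n)^n : i ∉ f[n]}`. -/
def MazurM (n : ℕ) (i : Fin (2 * n)) : Set (Fin n → Fin (2 * n)) :=
  {f | ∀ j : Fin n, f j ≠ i}

/-- `φ_n(B) = min{|F| : F ⊆ 2n, B ⊆ ⋃_{i∈F} M^n_i}`. -/
noncomputable def mazurPhi (n : ℕ) (B : Set (Fin n → Fin (2 * n))) : ℕ :=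
  sInf {k : ℕ | ∃ F : Finset (Fin (2 * n)), F.card = k ∧ B ⊆ ⋃ i ∈ F, MazurM n i}

/-- Mazur's ideal `M` on `∑_{n∈ω} (2n)^n`: sets `A` with `sup_n φ_n(A_{(n)}) < ∞`. -/
def MazurIdeal : Set (Set MazurPt) :=
  {A | ∃ k : ℕ, ∀ n : ℕ, mazurPhi n {f | (⟨n, f⟩ : MazurPt) ∈ A} ≤ k}

/-- The `i`-th binary digit of `t`. -/
noncomputable def dig (i : ℕ) (t : ℝ) : Bool := decide (⌊t * 2^(i+1)⌋ % 2 = 1)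

noncomputable def hmap (t : ℝ) : ℕ → Bool := fun i => dig i t

def patF (n k : ℕ) : Fin n → Bool := fun i => Nat.testBit k (n - 1 - (i : ℕ))

lemma dig_measurable (i : ℕ) : Measurable (dig i) := by
  have h1 : Measurable (fun t : ℝ => ⌊t * 2^(i+1)⌋) :=
    Int.measurable_floor.comp (measurable_id.mul_const _)
  exact (measurable_from_top (f := fun z : ℤ => decide (z % 2 = 1))).comp h1

lemma dig_eq_testBit {n k i : ℕ} (hi : i < n) {t : ℝ}
    (h1 : (k : ℝ)/2^n ≤ t) (h2 : t < ((k : ℝ)+1)/2^n) :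
    dig i t = Nat.testBit k (n - 1 - i) := by
  set m := n - (i+1) with hm
  have hmn : i + 1 + m = n := by omega
  have hpow : (2:ℝ)^n = 2^(i+1) * 2^m := by rw [← pow_add, hmn]
  have h2m : (0:ℝ) < 2^m := by positivity
  have h2i : (0:ℝ) < 2^(i+1) := by positivity
  have hfl : ⌊t * 2^(i+1)⌋ = ((k / 2^m : ℕ) : ℤ) := by
    rw [Int.floor_eq_iff]
    constructor
    · have hc : ((k / 2^m : ℕ) : ℝ) ≤ (k : ℝ) / 2^m := by
        calc ((k / 2^m : ℕ) : ℝ) ≤ (k : ℝ) / ((2^m : ℕ) : ℝ) := Nat.cast_div_le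
        _ = (k : ℝ) / 2^m := by push_cast; ring_nf
      have : (k : ℝ) / 2^m ≤ t * 2^(i+1) := by
        rw [div_le_iff₀ h2m]
        calc (k : ℝ) = (k / 2^n) * 2^n := by field_simp
        _ ≤ t * 2^n := by apply mul_le_mul_of_nonneg_right h1; positivity
        _ = t * 2^(i+1) * 2^m := by rw [hpow]; ring
      exact_mod_cast le_trans hc this
    · have hub : t * 2^(i+1) < ((k:ℝ)+1) / 2^m := by
        rw [lt_div_iff₀ h2m]
        calc t * 2^(i+1) * 2^m = t * 2^n := by rw [hpow]; ring
        _ < (((k:ℝ)+1)/2^n) * 2^n := by apply mul_lt_mul_of_pos_right h2; positivity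
        _ = (k:ℝ)+1 := by field_simp
      have hnat : k + 1 ≤ (k / 2^m + 1) * 2^m := by
        have e0 := Nat.div_add_mod k (2^m)
        have e2 := Nat.mod_lt k (show 0 < 2^m from by positivity)
        have e1 : (k/2^m+1)*2^m = 2^m*(k/2^m) + 2^m := by ring
        omega
      have hcast : ((k:ℝ)+1)/2^m ≤ ((k / 2^m : ℕ) : ℝ) + 1 := by
        rw [div_le_iff₀ h2m]
        have : ((k+1 : ℕ) : ℝ) ≤ (((k / 2^m + 1) * 2^m : ℕ) : ℝ) := by exact_mod_cast hnat
        push_cast at this ⊢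
        linarith
      have : t * 2^(i+1) < ((k / 2^m : ℕ) : ℝ) + 1 := lt_of_lt_of_le hub hcast
      exact_mod_cast this
  have : n - 1 - i = m := by omega
  rw [this, dig, hfl, Nat.testBit_eq_decide_div_mod_eq]
  rw [decide_eq_decide]
  omega

lemma patF_inj {n : ℕ} {k k' : ℕ} (hk : k < 2^n) (hk' : k' < 2^n)
    (h : patF n k = patF n k') : k = k' := by
  apply Nat.eq_of_testBit_eq
  intro j
  by_cases hj : j < n
  · have := congrFun h ⟨n - 1 - j, by omega⟩
    simpa [patF, Nat.sub_sub_self, show n - 1 - (n - 1 - j) = j by omega] using this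
  · rw [Nat.testBit_lt_two_pow (lt_of_lt_of_le hk (Nat.pow_le_pow_right (by norm_num) (by omega))),
      Nat.testBit_lt_two_pow (lt_of_lt_of_le hk' (Nat.pow_le_pow_right (by norm_num) (by omega)))]

/-- the projection to the first n coordinates -/
def proj (n : ℕ) (x : ℕ → Bool) : Fin n → Bool := fun i => x i

/-- extension by false -/
def extf (n : ℕ) (v : Fin n → Bool) : ℕ → Bool := fun i => if h : i < n then v ⟨i, h⟩ else false

lemma extf_proj {n : ℕ} (x : ℕ → Bool) : ∀ i, i < n → extf n (proj n x) i = x i := by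
  intro i hi; simp [extf, proj, hi]

lemma exists_avoiding (F : Set (ℕ → Bool)) (hF : F.Finite) :
    ∃ C ∈ OmegaHalf, (∀ x ∈ F, x ∉ C) ∧
      ∃ U : Set ℝ, MeasurableSet U ∧ U ⊆ Icc (0:ℝ) 1 ∧ ENNReal.ofReal (1/2) ≤ volume U ∧
        ∀ t ∈ U, hmap t ∈ C := by
  classical
  set n := hF.toFinset.card + 1 with hn
  have hn1 : 1 ≤ n := by omega
  -- bad numbers: those whose pattern matches some element of F
  set bad : Finset ℕ := (Finset.range (2^n)).filter
      (fun m => ∃ x ∈ F, ∀ i : Fin n, x (i : ℕ) = patF n m i) with hbad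
  have hbadcard : bad.card ≤ hF.toFinset.card := by
    apply Finset.card_le_card_of_injOn
      (fun m => if h : ∃ x ∈ F, ∀ i : Fin n, x (i : ℕ) = patF n m i then h.choose else (fun _ => false))
    · intro m hm
      rw [hbad, Finset.mem_coe, Finset.mem_filter] at hm
      beta_reduce
      rw [dif_pos hm.2, Finset.mem_coe, Set.Finite.mem_toFinset]
      exact hm.2.choose_spec.1
    · intro m hm m' hm' he
      rw [Finset.mem_coe, hbad, Finset.mem_filter] at hm
      rw [Finset.mem_coe, hbad, Finset.mem_filter] at hm'
      rw [Finset.mem_range] at hm hm'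
      simp only [dif_pos hm.2, dif_pos hm'.2] at he
      have s1 := hm.2.choose_spec.2
      have s2 := hm'.2.choose_spec.2
      apply patF_inj hm.1 hm'.1
      funext i
      rw [← s1 i, he, s2 i]
  have hle : 2^(n-1) ≤ ((Finset.range (2^n)) \ bad).card := by
    have h1 := Finset.le_card_sdiff bad (Finset.range (2^n))
    rw [Finset.card_range] at h1
    have h2 : 2^n = 2*2^(n-1) := by
      conv_lhs => rw [show n = (n-1)+1 by omega]
      ring
    have h3 : hF.toFinset.card < 2^(n-1) := by
      have : n - 1 = hF.toFinset.card := by omega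
      rw [this]; exact Nat.lt_two_pow_self
    omega
  obtain ⟨S, hSsub, hScard⟩ := Finset.exists_subset_card_eq hle
  have hSlt : ∀ m ∈ S, m < 2^n := by
    intro m hm
    have := hSsub hm
    rw [Finset.mem_sdiff, Finset.mem_range] at this
    exact this.1
  have hSnotbad : ∀ m ∈ S, m ∉ bad := by
    intro m hm
    have := hSsub hm
    rw [Finset.mem_sdiff] at this
    exact this.2
  set T : Finset (Fin n → Bool) := S.image (patF n) with hT
  set C : Set (ℕ → Bool) := proj n ⁻¹' (↑T) with hC
  have hTcard : T.card = 2^(n-1) := by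
    rw [hT, Finset.card_image_of_injOn, hScard]
    intro m hm m' hm' h
    exact patF_inj (hSlt m hm) (hSlt m' hm') h
  have hdet : DetBy C n := by
    intro x y hxy hx
    have : proj n y = proj n x := by
      funext i; exact (hxy i i.isLt).symm
    rw [hC, Set.mem_preimage, this]
    exact hx
  refine ⟨C, ⟨⟨?_, n, hdet, ?_⟩, ?_, ?_⟩⟩
  · -- clopen
    have hcont : Continuous (proj n) := continuous_pi (fun i => continuous_apply (i : ℕ))
    exact (isClopen_discrete (↑T : Set (Fin n → Bool))).preimage hcont
  · -- counting
    have he : {s : ℕ → Bool // s ∈ C ∧ ∀ i : ℕ, n ≤ i → s i = false} ≃ {v // v ∈ T} := by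
      refine ⟨fun s => ⟨proj n s.1, s.2.1⟩, fun v => ⟨extf n v.1, ?_, ?_⟩, ?_, ?_⟩
      · rw [hC, Set.mem_preimage]
        have : proj n (extf n v.1) = v.1 := by
          funext i
          simp [proj, extf, i.isLt]
        rw [this]
        exact v.2
      · intro i hi
        simp [extf, show ¬ (i < n) by omega]
      · intro s
        apply Subtype.ext
        funext i
        by_cases hi : i < n
        · simp [extf, proj, hi]
        · simp only [extf, dif_neg hi]
          exact (s.2.2 i (by omega)).symm
      · intro v
        apply Subtype.ext
        funext i
        simp [proj, extf, i.isLt]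
    rw [Nat.card_congr he, Nat.card_eq_fintype_card, Fintype.card_coe, hTcard]
    conv_rhs => rw [show n = (n-1)+1 by omega]
    ring
  · -- avoids F
    intro x hx hxC
    rw [hC, Set.mem_preimage, Finset.mem_coe, hT, Finset.mem_image] at hxC
    obtain ⟨m, hmS, hm⟩ := hxC
    apply hSnotbad m hmS
    rw [hbad, Finset.mem_filter, Finset.mem_range]
    refine ⟨hSlt m hmS, x, hx, ?_⟩
    intro i
    exact (congrFun hm i).symm
  · -- the set U
    refine ⟨⋃ k ∈ S, Ico ((k:ℝ)/2^n) (((k:ℝ)+1)/2^n), ?_, ?_, ?_, ?_⟩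
    · exact MeasurableSet.biUnion S.countable_toSet (fun k _ => measurableSet_Ico)
    · intro t ht
      rw [Set.mem_iUnion₂] at ht
      obtain ⟨k, hkS, hk⟩ := ht
      have hk2 : k < 2^n := hSlt k hkS
      constructor
      · refine le_trans ?_ hk.1
        positivity
      · refine le_trans hk.2.le ?_
        rw [div_le_one (by positivity)]
        have : (k:ℝ) + 1 ≤ (2:ℝ)^n := by exact_mod_cast hk2
        linarith [this]
    · -- measure ≥ 1/2
      have key : ∀ k k' : ℕ, k < k' →
          Disjoint (Ico ((k:ℝ)/2^n) (((k:ℝ)+1)/2^n)) (Ico ((k':ℝ)/2^n) (((k':ℝ)+1)/2^n)) := by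
        intro k k' hkk
        rw [Set.disjoint_left]
        intro t ht ht'
        have h1 : (k:ℝ)+1 ≤ (k':ℝ) := by exact_mod_cast hkk
        have h2 : ((k:ℝ)+1)/2^n ≤ (k':ℝ)/2^n := by gcongr
        have := ht.2
        have := ht'.1
        linarith
      have hdisj : (↑S : Set ℕ).Pairwise
          (Function.onFun Disjoint (fun k => Ico ((k:ℝ)/2^n) (((k:ℝ)+1)/2^n))) := by
        intro k _ k' _ hne
        rcases lt_or_gt_of_ne hne with h | h
        · exact key k k' h
        · exact (key k' k h).symm
      rw [measure_biUnion_finset hdisj (fun k _ => measurableSet_Ico)]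
      have hone : ∀ k ∈ S, volume (Ico ((k:ℝ)/2^n) (((k:ℝ)+1)/2^n)) =
          ENNReal.ofReal ((1:ℝ)/2^n) := by
        intro k _
        rw [Real.volume_Ico]
        congr 1
        ring
      rw [Finset.sum_congr rfl hone, Finset.sum_const, hScard, nsmul_eq_mul]
      have : ((2^(n-1) : ℕ) : ENNReal) * ENNReal.ofReal ((1:ℝ)/2^n) =
          ENNReal.ofReal ((2^(n-1) : ℕ) * ((1:ℝ)/2^n)) := by
        rw [ENNReal.ofReal_mul (by positivity), ENNReal.ofReal_natCast]
      rw [this]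
      have harith : ((2^(n-1) : ℕ) : ℝ) * ((1:ℝ)/2^n) = 1/2 := by
        push_cast
        rw [show n = (n-1)+1 by omega]
        field_simp
        rw [Nat.add_sub_cancel, pow_succ]
      rw [harith]
    · intro t ht
      rw [Set.mem_iUnion₂] at ht
      obtain ⟨k, hkS, hk⟩ := ht
      rw [hC, Set.mem_preimage, Finset.mem_coe, hT, Finset.mem_image]
      refine ⟨k, hkS, ?_⟩
      funext i
      rw [patF]
      exact (dig_eq_testBit i.isLt hk.1 hk.2).symm

theorem solecki_not_egorov : ¬ IsEgorov SoleckiIdeal := by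
  classical
  intro hE
  set f : ↥OmegaHalf → ℝ → ℝ := fun C t => if hmap t ∈ C.1 then 1 else 0 with hf
  have hmeas : ∀ a : ↥OmegaHalf, AEMeasurable (f a) (volume.restrict (Icc (0:ℝ) 1)) := by
    intro C
    obtain ⟨hcl, n, hdet, hcount⟩ := C.2
    have hiff : ∀ x : ℕ → Bool, x ∈ C.1 ↔ proj n x ∈ {v : Fin n → Bool | extf n v ∈ C.1} := by
      intro x
      constructor
      · intro hx
        exact hdet x (extf n (proj n x)) (fun i hi => (extf_proj x i hi).symm) hx
      · intro hx
        exact hdet (extf n (proj n x)) x (fun i hi => extf_proj x i hi) hx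
    have hsetm : MeasurableSet {t : ℝ | hmap t ∈ C.1} := by
      have : {t : ℝ | hmap t ∈ C.1} =
          (fun t => proj n (hmap t)) ⁻¹' {v : Fin n → Bool | extf n v ∈ C.1} := by
        ext t; exact hiff (hmap t)
      rw [this]
      have hm1 : Measurable (fun t => proj n (hmap t)) :=
        measurable_pi_iff.mpr (fun i => dig_measurable (i : ℕ))
      exact hm1 (Set.Finite.measurableSet (Set.toFinite _))
    have : f C = Set.indicator {t : ℝ | hmap t ∈ C.1} (fun _ => (1:ℝ)) := by
      funext t
      rw [hf, Set.indicator_apply]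
      rfl
    rw [this]
    exact ((measurable_const.indicator hsetm).aemeasurable)
  have hpt : IConvPtwise SoleckiIdeal f (fun _ => 0) := by
    intro t _ ε hε
    refine ⟨{hmap t}, Set.finite_singleton _, ?_⟩
    intro a ha
    simp only [Set.mem_setOf_eq, sub_zero] at ha
    rw [Set.mem_iUnion₂]
    refine ⟨hmap t, rfl, ?_⟩
    by_contra hne
    simp only [SolGen, Set.mem_setOf_eq] at hne
    have hz : f a t = 0 := if_neg hne
    rw [hz] at ha
    simp at ha
    linarith
  obtain ⟨M, hMsub, hMnm, hMd, hMu⟩ := hE f (fun _ => 0) hmeas aemeasurable_const hpt (1/4) (by norm_num)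
  obtain ⟨F, hFfin, hFsub⟩ := hMu 1 one_pos
  obtain ⟨C, hCOm, hCavoid, U, hUm, hUsub, hUvol, hUC⟩ := exists_avoiding F hFfin
  -- volume M > 3/4
  have hIcc : volume (Icc (0:ℝ) 1) = 1 := by simp
  have hM34 : ENNReal.ofReal (3/4) < volume M := by
    have h1 : volume (Icc (0:ℝ) 1) ≤ volume (Icc (0:ℝ) 1 \ M) + volume M := by
      refine le_trans (measure_mono ?_) (measure_union_le _ _)
      intro x hx
      by_cases h : x ∈ M
      · exact Or.inr h
      · exact Or.inl ⟨hx, h⟩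
    rw [hIcc] at h1
    have h3 : (1:ENNReal) - volume (Icc (0:ℝ) 1 \ M) ≤ volume M :=
      tsub_le_iff_left.mpr h1
    refine lt_of_lt_of_le ?_ h3
    rw [lt_tsub_iff_right]
    calc ENNReal.ofReal (3/4) + volume (Icc (0:ℝ) 1 \ M)
        < ENNReal.ofReal (3/4) + ENNReal.ofReal (1/4) :=
          ENNReal.add_lt_add_left ENNReal.ofReal_ne_top hMd
    _ = ENNReal.ofReal 1 := by
          rw [← ENNReal.ofReal_add (by norm_num) (by norm_num)]; norm_num
    _ = 1 := ENNReal.ofReal_one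
  -- M ∩ U nonempty
  have hnon : (M ∩ U).Nonempty := by
    by_contra hemp
    rw [Set.not_nonempty_iff_eq_empty] at hemp
    have h2 : volume (M ∪ U) + volume (M ∩ U) = volume M + volume U :=
      measure_union_add_inter₀ M hUm.nullMeasurableSet
    rw [hemp, measure_empty, add_zero] at h2
    have h3 : volume (M ∪ U) ≤ 1 := by
      rw [← hIcc]
      exact measure_mono (Set.union_subset hMsub hUsub)
    rw [h2] at h3
    have h4 : ENNReal.ofReal (3/4) + ENNReal.ofReal (1/2) ≤ volume M + volume U :=
      add_le_add hM34.le hUvol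
    have h5 := le_trans h4 h3
    rw [← ENNReal.ofReal_add (by norm_num) (by norm_num), ← ENNReal.ofReal_one,
      ENNReal.ofReal_le_ofReal_iff (by norm_num)] at h5
    norm_num at h5
  obtain ⟨t, htM, htU⟩ := hnon
  have hfC : (⟨C, hCOm⟩ : ↥OmegaHalf) ∈ {a : ↥OmegaHalf | ∃ t ∈ M, (1:ℝ) ≤ |f a t - 0|} := by
    refine ⟨t, htM, ?_⟩
    have ho : f ⟨C, hCOm⟩ t = 1 := if_pos (hUC t htU)
    rw [ho]
    norm_num
  have := hFsub hfC
  rw [Set.mem_iUnion₂] at this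
  obtain ⟨x, hxF, hxC⟩ := this
  exact hCavoid x hxF hxC

/-- index of the subinterval of length 1/(2n) containing t -/
noncomputable def inat (n : ℕ) (t : ℝ) : ℕ := min (⌊t * ((2*n : ℕ) : ℝ)⌋.toNat) (2*n - 1)

lemma inat_lt (n : ℕ) (hn : 1 ≤ n) (t : ℝ) : inat n t < 2*n := by
  have : inat n t ≤ 2*n - 1 := min_le_right _ _
  omega

lemma inat_measurable (n : ℕ) : Measurable (inat n) := by
  have h1 : Measurable (fun t : ℝ => ⌊t * ((2*n : ℕ) : ℝ)⌋) :=
    Int.measurable_floor.comp (measurable_id.mul_const _)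
  exact (measurable_from_top (f := fun z : ℤ => min z.toNat (2*n-1))).comp h1

open Classical in
/-- The Mazur counterexample family. -/
noncomputable def mzF : MazurPt → ℝ → ℝ :=
  fun a t => if (a.1 ≠ 0 ∧ ∀ j : Fin a.1, (a.2 j : ℕ) ≠ inat a.1 t) then 1 else 0

lemma mzF_meas (a : MazurPt) : Measurable (mzF a) := by
  classical
  have : mzF a = Set.indicator
      ((inat a.1) ⁻¹' {m : ℕ | a.1 ≠ 0 ∧ ∀ j : Fin a.1, (a.2 j : ℕ) ≠ m}) (fun _ => (1:ℝ)) := by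
    funext t
    rw [Set.indicator_apply, mzF]
    by_cases h : (a.1 ≠ 0 ∧ ∀ j : Fin a.1, (a.2 j : ℕ) ≠ inat a.1 t)
    · rw [if_pos h]
      exact (if_pos (show t ∈ _ from h)).symm
    · rw [if_neg h]
      exact (if_neg (show t ∉ _ from h)).symm
  rw [this]
  exact measurable_const.indicator ((inat_measurable a.1) ((Set.to_countable _).measurableSet))

lemma mazurPhi_le_one {n : ℕ} {B : Set (Fin n → Fin (2*n))} (i : Fin (2*n))
    (h : B ⊆ MazurM n i) : mazurPhi n B ≤ 1 := by
  apply Nat.sInf_le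
  exact ⟨{i}, Finset.card_singleton i, by simpa using h⟩

theorem mazur_not_egorov : ¬ IsEgorov MazurIdeal := by
  classical
  intro hE
  have hmeas : ∀ a : MazurPt, AEMeasurable (mzF a) (volume.restrict (Icc (0:ℝ) 1)) :=
    fun a => (mzF_meas a).aemeasurable
  have hpt : IConvPtwise MazurIdeal mzF (fun _ => 0) := by
    intro t _ ε hε
    refine ⟨1, fun n => ?_⟩
    by_cases hn : n = 0
    · subst hn
      have : {f : Fin 0 → Fin 0 | (⟨0, f⟩ : MazurPt) ∈ {a : MazurPt | ε ≤ |mzF a t - 0|}} = ∅ := by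
        ext g
        simp only [Set.mem_setOf_eq, Set.mem_empty_iff_false, iff_false, not_le, sub_zero]
        have : mzF ⟨0, g⟩ t = 0 := by
          rw [mzF]; simp
        rw [this]
        simpa using hε
      rw [this]
      refine le_trans (Nat.sInf_le ⟨∅, rfl, by simp⟩) (by simp)
    · have hn1 : 1 ≤ n := Nat.one_le_iff_ne_zero.mpr hn
      apply mazurPhi_le_one ⟨inat n t, inat_lt n hn1 t⟩
      intro g hg
      have hg' : ε ≤ |mzF ⟨n, g⟩ t - 0| := hg
      intro j hj
      have hz : mzF ⟨n, g⟩ t = 0 := by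
        rw [mzF, if_neg]
        rintro ⟨-, h2⟩
        exact h2 j (congrArg Fin.val hj)
      rw [hz] at hg'
      simp at hg'
      linarith
  obtain ⟨M, hMsub, hMnm, hMd, hMu⟩ :=
    hE mzF (fun _ => 0) hmeas aemeasurable_const hpt (1/4) (by norm_num)
  have hIcc : volume (Icc (0:ℝ) 1) = 1 := by simp
  have hM34 : ENNReal.ofReal (3/4) < volume M := by
    have h1 : volume (Icc (0:ℝ) 1) ≤ volume (Icc (0:ℝ) 1 \ M) + volume M := by
      refine le_trans (measure_mono ?_) (measure_union_le _ _)
      intro x hx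
      by_cases h : x ∈ M
      · exact Or.inr h
      · exact Or.inl ⟨hx, h⟩
    rw [hIcc] at h1
    have h3 : (1:ENNReal) - volume (Icc (0:ℝ) 1 \ M) ≤ volume M :=
      tsub_le_iff_left.mpr h1
    refine lt_of_lt_of_le ?_ h3
    rw [lt_tsub_iff_right]
    calc ENNReal.ofReal (3/4) + volume (Icc (0:ℝ) 1 \ M)
        < ENNReal.ofReal (3/4) + ENNReal.ofReal (1/4) :=
          ENNReal.add_lt_add_left ENNReal.ofReal_ne_top hMd
    _ = ENNReal.ofReal 1 := by
          rw [← ENNReal.ofReal_add (by norm_num) (by norm_num)]; norm_num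
    _ = 1 := ENNReal.ofReal_one
  obtain ⟨k, hk⟩ := hMu 1 one_pos
  set n := k + 2 with hnk
  have hn1 : 1 ≤ n := by omega
  set slice : Set (Fin n → Fin (2*n)) :=
    {f | (⟨n, f⟩ : MazurPt) ∈ {a : MazurPt | ∃ t ∈ M, (1:ℝ) ≤ |mzF a t - 0|}} with hslice
  -- the indices hit by M
  set I' : Finset (Fin (2*n)) := Finset.univ.filter (fun i => ∃ t ∈ M, inat n t = (i:ℕ)) with hI'
  -- interval bounds for inat fibers
  have hfiber : ∀ t ∈ Icc (0:ℝ) 1, ∀ i : Fin (2*n), inat n t = (i:ℕ) →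
      t ∈ Icc ((i:ℝ)/((2*n:ℕ):ℝ)) (((i:ℝ)+1)/((2*n:ℕ):ℝ)) := by
    intro t ht i hi
    have h2n : (0:ℝ) < (2*n : ℕ) := by positivity
    have hfl0 : (0:ℤ) ≤ ⌊t * (2*n : ℕ)⌋ := by
      apply Int.floor_nonneg.mpr
      have := ht.1
      positivity
    constructor
    · have h1 : (i:ℕ) ≤ ⌊t * (2*n:ℕ)⌋.toNat := by
        rw [← hi, inat]; exact min_le_left _ _
      have h2 : ((i:ℕ):ℝ) ≤ t * (2*n:ℕ) := by
        calc ((i:ℕ):ℝ) ≤ (⌊t * (2*n:ℕ)⌋.toNat : ℝ) := by exact_mod_cast h1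
        _ = ((⌊t * ((2*n:ℕ):ℝ)⌋ : ℤ) : ℝ) := by
              exact_mod_cast congrArg (Int.cast : ℤ → ℝ) (Int.toNat_of_nonneg hfl0)
        _ ≤ t * (2*n:ℕ) := Int.floor_le _
      rw [div_le_iff₀ h2n]
      exact h2
    · by_cases hc : ⌊t * (2*n:ℕ)⌋.toNat ≤ 2*n - 1
      · have h1 : (i:ℕ) = ⌊t * (2*n:ℕ)⌋.toNat := by
          rw [← hi, inat, min_eq_left hc]
        have h2 : t * (2*n:ℕ) < ((i:ℕ):ℝ) + 1 := by
          have := Int.lt_floor_add_one (t * (2*n:ℕ))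
          have he : ((⌊t * ((2*n:ℕ):ℝ)⌋ : ℤ) : ℝ) = ((i:ℕ):ℝ) := by
            rw [h1]
            exact_mod_cast (congrArg (Int.cast : ℤ → ℝ) (Int.toNat_of_nonneg hfl0)).symm
          linarith [he ▸ this]
        rw [le_div_iff₀ h2n]
        push_cast at h2 ⊢
        linarith
      · have h1 : (i:ℕ) = 2*n - 1 := by
          rw [← hi, inat, min_eq_right (by omega)]
        have h2 : ((i:ℕ):ℝ) + 1 = 2*n := by
          rw [h1]
          push_cast [Nat.cast_sub (by omega : 1 ≤ 2*n)]
          ring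
        rw [le_div_iff₀ h2n, h2]
        have := ht.2
        push_cast
        nlinarith [ht.2]
  -- card of I' is at least n+1
  have hIcard : n + 1 ≤ I'.card := by
    by_contra hcon
    push_neg at hcon
    have hcov : M ⊆ ⋃ i ∈ I', Icc ((i:ℝ)/((2*n:ℕ):ℝ)) (((i:ℝ)+1)/((2*n:ℕ):ℝ)) := by
      intro t ht
      have hti : t ∈ Icc (0:ℝ) 1 := hMsub ht
      set i : Fin (2*n) := ⟨inat n t, inat_lt n hn1 t⟩ with hidef
      rw [Set.mem_iUnion₂]
      refine ⟨i, ?_, hfiber t hti i rfl⟩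
      rw [hI', Finset.mem_filter]
      exact ⟨Finset.mem_univ _, t, ht, rfl⟩
    have hb1 : volume M ≤ ∑ i ∈ I', volume (Icc ((i:ℝ)/((2*n:ℕ):ℝ)) (((i:ℝ)+1)/((2*n:ℕ):ℝ))) :=
      le_trans (measure_mono hcov) (measure_biUnion_finset_le _ _)
    have hone : ∀ i ∈ I', volume (Icc ((i:ℝ)/((2*n:ℕ):ℝ)) (((i:ℝ)+1)/((2*n:ℕ):ℝ))) =
        ENNReal.ofReal ((1:ℝ)/((2*n:ℕ):ℝ)) := by
      intro i _
      rw [Real.volume_Icc]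
      congr 1
      field_simp
      ring
    rw [Finset.sum_congr rfl hone, Finset.sum_const, nsmul_eq_mul] at hb1
    have hb2 : (I'.card : ENNReal) * ENNReal.ofReal ((1:ℝ)/((2*n:ℕ):ℝ)) ≤
        (n : ENNReal) * ENNReal.ofReal ((1:ℝ)/((2*n:ℕ):ℝ)) := by
      apply mul_le_mul_left
      exact_mod_cast Nat.le_of_lt_succ (by omega)
    have hb3 : (n : ENNReal) * ENNReal.ofReal ((1:ℝ)/((2*n:ℕ):ℝ)) = ENNReal.ofReal (1/2) := by
      rw [← ENNReal.ofReal_natCast, ← ENNReal.ofReal_mul (by positivity)]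
      congr 1
      have : (n:ℝ) ≠ 0 := by positivity
      field_simp
      push_cast
      ring
    have := le_trans hM34.le (le_trans hb1 (le_trans hb2 (le_of_eq hb3)))
    rw [ENNReal.ofReal_le_ofReal_iff (by norm_num)] at this
    norm_num at this
  -- a cover of the slice always exists
  have hfull : slice ⊆ ⋃ i ∈ (Finset.univ : Finset (Fin (2*n))), MazurM n i := by
    intro g _
    rw [Set.mem_iUnion₂]
    have : ∃ i : Fin (2*n), i ∉ Finset.univ.image g := by
      by_contra hall
      push_neg at hall
      have : (Finset.univ : Finset (Fin (2*n))) ⊆ Finset.univ.image g :=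
        fun i _ => hall i
      have hcard := Finset.card_le_card this
      rw [Finset.card_univ, Fintype.card_fin] at hcard
      have := Finset.card_image_le (s := (Finset.univ : Finset (Fin n))) (f := g)
      rw [Finset.card_univ, Fintype.card_fin] at this
      omega
    obtain ⟨i, hi⟩ := this
    refine ⟨i, Finset.mem_univ _, ?_⟩
    intro j hj
    exact hi (Finset.mem_image.mpr ⟨j, Finset.mem_univ _, hj⟩)
  -- the minimal cover
  have hmem : mazurPhi n slice ∈
      {k : ℕ | ∃ F : Finset (Fin (2 * n)), F.card = k ∧ slice ⊆ ⋃ i ∈ F, MazurM n i} :=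
    Nat.sInf_mem ⟨Finset.univ.card, Finset.univ, rfl, hfull⟩
  obtain ⟨F, hFcard, hFcov⟩ := hmem
  have hphile : mazurPhi n slice ≤ k := hk n
  have hFk : F.card ≤ n := by omega
  -- pick i ∈ I' \ F
  have : ∃ i ∈ I', i ∉ F := by
    by_contra hcon
    push_neg at hcon
    have := Finset.card_le_card hcon
    omega
  obtain ⟨i, hiI, hiF⟩ := this
  rw [hI', Finset.mem_filter] at hiI
  obtain ⟨-, t, htM, hti⟩ := hiI
  -- build g hitting all of F and avoiding i
  have h2n2 : 2 ≤ 2*n := by omega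
  set j0 : Fin (2*n) := if (i:ℕ) = 0 then ⟨1, by omega⟩ else ⟨0, by omega⟩ with hj0
  have hj0i : j0 ≠ i := by
    rw [hj0]
    by_cases h : (i:ℕ) = 0
    · rw [if_pos h]
      intro he
      have := congrArg Fin.val he
      simp [h] at this
    · rw [if_neg h]
      intro he
      have := congrArg Fin.val he
      simp at this
      exact h this.symm
  have hlen : F.toList.length ≤ n := by rw [Finset.length_toList]; omega
  set g : Fin n → Fin (2*n) :=
    fun j => if h : (j:ℕ) < F.toList.length then F.toList.get ⟨j, h⟩ else j0 with hg
  have hgdef : ∀ j : Fin n, g j =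
      if h : (j:ℕ) < F.toList.length then F.toList.get ⟨j, h⟩ else j0 := fun j => rfl
  have hgi : ∀ j : Fin n, g j ≠ i := by
    intro j
    rw [hgdef j]
    by_cases h : (j:ℕ) < F.toList.length
    · rw [dif_pos h]
      intro he
      apply hiF
      rw [← he]
      rw [← Finset.mem_toList]
      exact List.get_mem _ _
    · rw [dif_neg h]
      exact hj0i
  have hghit : ∀ b ∈ F, ∃ j : Fin n, g j = b := by
    intro b hb
    rw [← Finset.mem_toList] at hb
    obtain ⟨idx, hidx, hval⟩ := List.mem_iff_get.mp hb
    refine ⟨⟨(idx:ℕ), lt_of_lt_of_le idx.isLt hlen⟩, ?_⟩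
    rw [hgdef, dif_pos (by simpa using idx.isLt)]
  -- g is in the slice
  have hgslice : g ∈ slice := by
    rw [hslice]
    refine ⟨t, htM, ?_⟩
    have : mzF ⟨n, g⟩ t = 1 := by
      rw [mzF, if_pos]
      refine ⟨show n ≠ 0 by omega, ?_⟩
      intro j
      rw [hti]
      intro he
      exact hgi j (Fin.ext he)
    rw [this]
    norm_num
  have := hFcov hgslice
  rw [Set.mem_iUnion₂] at this
  obtain ⟨b, hbF, hbM⟩ := this
  obtain ⟨j, hjb⟩ := hghit b hbF
  exact hbM j hjb


/-- The Solecki ideal `S` and Mazur's ideal `M` are not Egorov. -/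
theorem solecki_mazur_not_egorov : ¬ IsEgorov SoleckiIdeal ∧ ¬ IsEgorov MazurIdeal :=
  ⟨solecki_not_egorov, mazur_not_egorov⟩
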